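/- Let α₁, α₂ ∈ ℝ and let f, g : ℝ → ℝ be twice differentiable with f''(t) = -(α₁² - α₂²)·f(t) + 2α₁α₂·g(t) and g''(t) = -(α₁² - α₂²)·g(t) - 2α₁α₂·f(t) for all t. Then the function I₃,₁(t) = f'(t)·cos(α₁t)·cosh(α₂t) + g'(t)·sin(α₁t)·sinh(α₂t) + (α₁·f(t) - α₂·g(t))·sin(α₁t)·cosh(α₂t) - (α₁·g(t) + α₂·f(t))·cos(α₁t)·sinh(α₂t) is constant, i.e., I₃,₁(t) = I₃,₁(0) for all t ∈ ℝ. -/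

import Mathlib

theorem coupled_oscillators_first_integral_15 (α₁ α₂ : ℝ) (f f' g g' : ℝ → ℝ)
    (hf : ∀ t, HasDerivAt f (f' t) t)
    (hf' : ∀ t, HasDerivAt f' (-(α₁^2 - α₂^2) * f t + 2*α₁*α₂ * g t) t)
    (hg : ∀ t, HasDerivAt g (g' t) t)
    (hg' : ∀ t, HasDerivAt g' (-(α₁^2 - α₂^2) * g t - 2*α₁*α₂ * f t) t) :
    ∀ t : ℝ, f' t * Real.cos (α₁*t) * Real.cosh (α₂*t) + g' t * Real.sin (α₁*t) * Real.sinh (α₂*t) + (α₁ * f t - α₂ * g t) * Real.sin (α₁*t) * Real.cosh (α₂*t) - (α₁ * g t + α₂ * f t) * Real.cos (α₁*t) * Real.sinh (α₂*t) = f' 0 * Real.cos (α₁*0) * Real.cosh (α₂*0) + g' 0 * Real.sin (α₁*0) * Real.sinh (α₂*0) + (α₁ * f 0 - α₂ * g 0) * Real.sin (α₁*0) * Real.cosh (α₂*0) - (α₁ * g 0 + α₂ * f 0) * Real.cos (α₁*0) * Real.sinh (α₂*0) := by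
  set F : ℝ → ℝ := fun t => f' t * Real.cos (α₁*t) * Real.cosh (α₂*t) + g' t * Real.sin (α₁*t) * Real.sinh (α₂*t) + (α₁ * f t - α₂ * g t) * Real.sin (α₁*t) * Real.cosh (α₂*t) - (α₁ * g t + α₂ * f t) * Real.cos (α₁*t) * Real.sinh (α₂*t) with hF
  have key : ∀ t : ℝ, HasDerivAt F 0 t := by
    intro t
    have hc : HasDerivAt (fun t => Real.cos (α₁*t)) (-Real.sin (α₁*t) * (α₁*1)) t :=
      ((hasDerivAt_id t).const_mul α₁).cos
    have hs : HasDerivAt (fun t => Real.sin (α₁*t)) (Real.cos (α₁*t) * (α₁*1)) t :=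
      ((hasDerivAt_id t).const_mul α₁).sin
    have hch : HasDerivAt (fun t => Real.cosh (α₂*t)) (Real.sinh (α₂*t) * (α₂*1)) t :=
      ((hasDerivAt_id t).const_mul α₂).cosh
    have hsh : HasDerivAt (fun t => Real.sinh (α₂*t)) (Real.cosh (α₂*t) * (α₂*1)) t :=
      ((hasDerivAt_id t).const_mul α₂).sinh
    simp only [mul_one] at hc hs hch hsh
    have h := ((((hf' t).mul hc).mul hch).add (((hg' t).mul hs).mul hsh)).add
        (((((hf t).const_mul α₁).sub ((hg t).const_mul α₂)).mul hs).mul hch) |>.sub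
        (((((hg t).const_mul α₁).add ((hf t).const_mul α₂)).mul hc).mul hsh)
    refine h.congr_deriv ?_
    have hcs : Real.cos (α₁*t)^2 + Real.sin (α₁*t)^2 = 1 := by
      rw [add_comm]; exact Real.sin_sq_add_cos_sq _
    have hcsh : Real.cosh (α₂*t)^2 - Real.sinh (α₂*t)^2 = 1 := Real.cosh_sq_sub_sinh_sq _
    simp only [Pi.mul_apply, Pi.add_apply, Pi.sub_apply]
    nlinarith [hcs, hcsh, sq_nonneg (Real.cos (α₁*t)), sq_nonneg (Real.sin (α₁*t))]
  intro t
  have := is_const_of_deriv_eq_zero (f := F)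
    (fun x => (key x).differentiableAt) (fun x => (key x).deriv) t 0
  simpa [hF] using this
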